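/- Let m be a positive integer with gcd(3, m) = 1. Then the set {√3, √m, √(3+4m)} is linearly independent over ℚ. Consequently, if integers l_1,...,l_6 satisfy (l_1 − l_2)√m + ((l_3+l_4−l_5−l_6)/2)√3 + ((l_3−l_4+l_5−l_6)/2)√(3+4m) = 0, then l_3 + l_4 − l_5 − l_6 = 0. -/
import Mathlib

open Real

private lemma aux_two_term {n1 n2 : ℕ} (h2 : 0 < n2) (hns : ¬ IsSquare (n1 * n2))
    (a b : ℚ) (h : (a : ℝ) * Real.sqrt n1 + (b : ℝ) * Real.sqrt n2 = 0) :
    a = 0 ∧ b = 0 := by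
  have hirr : Irrational (Real.sqrt ((n1 * n2 : ℕ) : ℝ)) :=
    irrational_sqrt_natCast_iff.mpr hns
  have hprod : Real.sqrt ((n1 * n2 : ℕ) : ℝ) = Real.sqrt n1 * Real.sqrt n2 := by
    push_cast
    exact Real.sqrt_mul (by positivity) _
  have hn2 : (0:ℝ) < Real.sqrt n2 := Real.sqrt_pos.mpr (by positivity)
  have ha : a = 0 := by
    by_contra ha
    have ha' : (a : ℝ) ≠ 0 := by exact_mod_cast ha
    have hsq : Real.sqrt n2 * Real.sqrt n2 = (n2 : ℝ) :=
      Real.mul_self_sqrt (by positivity)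
    have hmul : (a : ℝ) * (Real.sqrt n1 * Real.sqrt n2) + b * n2 = 0 := by
      have := congrArg (· * Real.sqrt n2) h
      simp only [add_mul, zero_mul] at this
      calc (a : ℝ) * (Real.sqrt n1 * Real.sqrt n2) + b * n2
          = (a : ℝ) * Real.sqrt n1 * Real.sqrt n2 + b * (Real.sqrt n2 * Real.sqrt n2) := by
            rw [hsq]; ring
        _ = 0 := by rw [← mul_assoc]; linarith [this]
    have heq : Real.sqrt ((n1 * n2 : ℕ) : ℝ) = ((-b * n2 / a : ℚ) : ℝ) := by
      rw [hprod]
      push_cast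
      rw [eq_div_iff ha']
      linarith [hmul]
    exact hirr ⟨_, heq.symm⟩
  refine ⟨ha, ?_⟩
  rw [ha] at h
  push_cast at h
  simp only [zero_mul, zero_add] at h
  rcases mul_eq_zero.mp h with h' | h'
  · exact_mod_cast h'
  · exact absurd h' hn2.ne'

private lemma aux_key (m : ℕ) (hm : 0 < m) (hgcd : Nat.gcd 3 m = 1)
    (p q r : ℚ)
    (h : (p : ℝ) * Real.sqrt 3 + (q : ℝ) * Real.sqrt m
        + (r : ℝ) * Real.sqrt (3 + 4 * m) = 0) :
    p = 0 ∧ q = 0 ∧ r = 0 := by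
  have h3m : ¬ 3 ∣ m := by
    intro hd
    have := Nat.gcd_eq_left hd
    omega
  have hns3m : ¬ IsSquare (3 * m) := by
    rintro ⟨k, hk⟩
    have h3k : 3 ∣ k := by
      have hp3 : (3 : ℕ).Prime := by norm_num
      rcases (Nat.Prime.dvd_mul hp3).mp ⟨m, hk.symm⟩ with h | h <;> exact h
    obtain ⟨j, rfl⟩ := h3k
    have : m = 3 * (j * j) := by nlinarith [hk]
    exact h3m ⟨j * j, this⟩
  have h3C : ¬ 3 ∣ (3 + 4 * m) := by
    intro hd
    exact h3m (by omega)
  have hns3C : ¬ IsSquare (3 * (3 + 4 * m)) := by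
    rintro ⟨k, hk⟩
    have h3k : 3 ∣ k := by
      have hp3 : (3 : ℕ).Prime := by norm_num
      rcases (Nat.Prime.dvd_mul hp3).mp ⟨_, hk.symm⟩ with h | h <;> exact h
    obtain ⟨j, rfl⟩ := h3k
    have : 3 + 4 * m = 3 * (j * j) := by nlinarith [hk]
    exact h3C ⟨j * j, this⟩
  have hnsC : ¬ IsSquare (3 + 4 * m) := by
    intro hs
    have h2 : IsSquare ((3 + 4 * m : ℕ) : ZMod 4) := hs.map (Nat.castRingHom (ZMod 4))
    have h3' : ((3 + 4 * m : ℕ) : ZMod 4) = 3 := by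
      push_cast
      rw [show ((4 : ZMod 4)) = 0 from by decide]
      ring
    rw [h3'] at h2
    revert h2
    decide
  have hnsmC : ¬ IsSquare (m * (3 + 4 * m)) := by
    rintro ⟨k, hk⟩
    have hcop' : Nat.Coprime (3 + 4 * m) m :=
      (Nat.coprime_add_mul_right_left 3 m 4).mpr hgcd
    obtain ⟨d, hd⟩ := exists_eq_pow_of_mul_eq_pow (a := 3 + 4 * m) (b := m) (c := k)
      (isUnit_of_dvd_one (hcop' ▸ dvd_refl ((3 + 4 * m).gcd m))) (k := 2)
      (by rw [sq, mul_comm]; exact hk)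
    exact hnsC ⟨d, by rw [hd]; ring⟩
  -- real facts
  have hCr : (((3 + 4 * m : ℕ)) : ℝ) = 3 + 4 * (m : ℝ) := by push_cast; ring
  have hs3 : Real.sqrt 3 ^ 2 = 3 := Real.sq_sqrt (by norm_num)
  have hsm : Real.sqrt m ^ 2 = (m : ℝ) := Real.sq_sqrt (by positivity)
  have hsc : Real.sqrt (3 + 4 * (m:ℝ)) ^ 2 = 3 + 4 * (m : ℝ) := Real.sq_sqrt (by positivity)
  have hprod3m : Real.sqrt 3 * Real.sqrt m = Real.sqrt ((3 * m : ℕ) : ℝ) := by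
    push_cast
    rw [← Real.sqrt_mul (by norm_num)]
  have hirr3m : Irrational (Real.sqrt ((3 * m : ℕ) : ℝ)) :=
    irrational_sqrt_natCast_iff.mpr hns3m
  have hsq : ((p:ℝ) * Real.sqrt 3 + q * Real.sqrt m) ^ 2
      = ((r : ℝ) * Real.sqrt (3 + 4 * (m:ℝ))) ^ 2 := by
    have h' : (p : ℝ) * Real.sqrt 3 + q * Real.sqrt m
        = -(r * Real.sqrt (3 + 4 * (m:ℝ))) := by linarith
    rw [h']; ring
  have hkey : 2 * (p : ℝ) * q * (Real.sqrt 3 * Real.sqrt m)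
      = r ^ 2 * (3 + 4 * (m : ℝ)) - 3 * p ^ 2 - m * q ^ 2 := by
    nlinarith [hsq, hs3, hsm, hsc]
  have hpq : (p : ℝ) * q = 0 := by
    by_contra hpq0
    have hne : (2 * (p:ℝ) * q) ≠ 0 := fun hz => hpq0 (by linear_combination hz / 2)
    have heq : Real.sqrt ((3 * m : ℕ) : ℝ)
        = (((r ^ 2 * (3 + 4 * m) - 3 * p ^ 2 - m * q ^ 2) / (2 * p * q) : ℚ) : ℝ) := by
      rw [← hprod3m]
      push_cast
      rw [eq_div_iff hne]
      linear_combination hkey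
    exact hirr3m ⟨_, heq.symm⟩
  have hpq0 : p = 0 ∨ q = 0 := by
    rcases mul_eq_zero.mp hpq with h' | h'
    · left; exact_mod_cast h'
    · right; exact_mod_cast h'
  rcases hpq0 with hp | hq
  · rw [hp] at h
    push_cast at h
    have h' : (q : ℝ) * Real.sqrt ((m:ℕ) : ℝ)
        + (r : ℝ) * Real.sqrt (((3 + 4 * m : ℕ)) : ℝ) = 0 := by
      rw [hCr]; linarith [h]
    obtain ⟨hq0, hr0⟩ := aux_two_term (n1 := m) (n2 := 3 + 4 * m) (by omega) hnsmC q r h'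
    exact ⟨hp, hq0, hr0⟩
  · rw [hq] at h
    push_cast at h
    have h' : (p : ℝ) * Real.sqrt ((3:ℕ) : ℝ)
        + (r : ℝ) * Real.sqrt (((3 + 4 * m : ℕ)) : ℝ) = 0 := by
      rw [hCr]
      norm_num
      linarith [h]
    obtain ⟨hp0, hr0⟩ := aux_two_term (n1 := 3) (n2 := 3 + 4 * m) (by omega) hns3C p r h'
    exact ⟨hp0, hq, hr0⟩

theorem stmt17 (m : ℕ) (hm : 0 < m) (hgcd : Nat.gcd 3 m = 1) :
    LinearIndependent ℚ
      ![Real.sqrt 3, Real.sqrt m, Real.sqrt (3 + 4 * m)]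
    ∧ ∀ l1 l2 l3 l4 l5 l6 : ℤ,
        ((l1 : ℝ) - l2) * Real.sqrt m
          + (((l3 : ℝ) + l4 - l5 - l6) / 2) * Real.sqrt 3
          + (((l3 : ℝ) - l4 + l5 - l6) / 2) * Real.sqrt (3 + 4 * m) = 0 →
        l3 + l4 - l5 - l6 = 0 := by
  constructor
  · rw [Fintype.linearIndependent_iff]
    intro g hg
    rw [Fin.sum_univ_three] at hg
    simp only [Matrix.cons_val_zero, Matrix.cons_val_one, Matrix.head_cons,
      Matrix.cons_val_two, Matrix.tail_cons, Rat.smul_def] at hg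
    obtain ⟨h0, h1, h2⟩ := aux_key m hm hgcd (g 0) (g 1) (g 2) hg
    intro i
    fin_cases i <;> assumption
  · intro l1 l2 l3 l4 l5 l6 h
    have h' : ((((l3 + l4 - l5 - l6 : ℤ) : ℚ) / 2 : ℚ) : ℝ) * Real.sqrt 3
        + (((l1 - l2 : ℤ) : ℚ) : ℝ) * Real.sqrt m
        + ((((l3 - l4 + l5 - l6 : ℤ) : ℚ) / 2 : ℚ) : ℝ) * Real.sqrt (3 + 4 * m) = 0 := by
      push_cast
      linarith [h]
    obtain ⟨hp, _, _⟩ := aux_key m hm hgcd _ _ _ h'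
    have h0 : ((l3 + l4 - l5 - l6 : ℤ) : ℚ) = 0 := by
      have := hp
      field_simp at this
      exact_mod_cast this
    exact_mod_cast h0
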